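/- For any valid index code with locality r = 1, for every receiver i and any set P ⊂ [N] with i ∉ P: (i) I(c_{R_i}; x_i | x_{K_i ∪ P}) = m; (ii) H(c_{R_i} | x_i, x_{K_i}) = 0; and (iii) H(c_{R_i} | x_P) = m, where entropy is measured in units of log |A|. -/

import Mathlib

open Finset

/-- A unicast index coding problem on `N` receivers: receiver `i` demands message `i`
and knows messages indexed by `K i` as side information, with `i ∉ K i`. -/
structure IndexProblem (N : ℕ) where
  K : Fin N → Finset (Fin N)
  not_self : ∀ i, i ∉ K i

/-- A valid index code over alphabet `A` with message length `m` and codeword length `ℓ`: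
an encoder together with query sets `R i`, such that receiver `i` can decode `x i`
exactly from the queried codeword symbols `c_{R i}` and its side information. -/
structure IndexCode (N : ℕ) (G : IndexProblem N) (A : Type*) (m ℓ : ℕ) where
  enc : (Fin N → Fin m → A) → Fin ℓ → A
  R : Fin N → Finset (Fin ℓ)
  valid : ∀ (i : Fin N) (x y : Fin N → Fin m → A),
    (∀ t ∈ R i, enc x t = enc y t) → (∀ j ∈ G.K i, x j = y j) → x i = y i

/-- The optimal broadcast rate function `β_G^*(r)`: the infimum of broadcast rates `ℓ/m`
over all message lengths `m ≥ 1` and valid index codes with locality at most `r`. -/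
noncomputable def betaStar (A : Type*) {N : ℕ} (G : IndexProblem N) (r : ℝ) : ℝ :=
  sInf {β : ℝ | ∃ (m ℓ : ℕ) (_ : 0 < m) (C : IndexCode N G A m ℓ),
    (∀ i, ((C.R i).card : ℝ) ≤ r * m) ∧ β = (ℓ : ℝ) / m}

/-- Probability of the event `X = a` under the uniform distribution on the finite sample space `Ω`. -/
noncomputable def pr {Ω α : Type*} [Fintype Ω] [DecidableEq α] (X : Ω → α) (a : α) : ℝ :=
  ((Finset.univ.filter fun ω => X ω = a).card : ℝ) / (Fintype.card Ω : ℝ)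

/-- Shannon entropy (in nats) of a random variable on a uniform finite sample space. -/
noncomputable def ent {Ω α : Type*} [Fintype Ω] [Fintype α] [DecidableEq α] (X : Ω → α) : ℝ :=
  -∑ a : α, pr X a * Real.log (pr X a)

/-- Conditional entropy `H(X | Y)` (in nats). -/
noncomputable def condEnt {Ω α β : Type*} [Fintype Ω] [Fintype α] [Fintype β]
    [DecidableEq α] [DecidableEq β] (X : Ω → α) (Y : Ω → β) : ℝ :=
  ent (fun ω => (X ω, Y ω)) - ent Y

/-- Conditional mutual information `I(X ; Y | Z)` (in nats). -/
noncomputable def condMI {Ω α β γ : Type*} [Fintype Ω] [Fintype α] [Fintype β] [Fintype γ]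
    [DecidableEq α] [DecidableEq β] [DecidableEq γ]
    (X : Ω → α) (Y : Ω → β) (Z : Ω → γ) : ℝ :=
  condEnt X Z - condEnt X (fun ω => (Y ω, Z ω))

section aux
variable {Ω Ω' α β : Type*}

lemma pr_comp_equiv [Fintype Ω] [Fintype Ω'] [DecidableEq α] (Φ : Ω' ≃ Ω) (X : Ω → α) (a : α) :
    pr (fun ω => X (Φ ω)) a = pr X a := by
  unfold pr
  rw [Fintype.card_congr Φ]
  have : (Finset.univ.filter fun ω => X (Φ ω) = a).card
      = (Finset.univ.filter fun ω => X ω = a).card := by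
    refine Finset.card_bij (fun ω _ => Φ ω) ?_ ?_ ?_
    · intro ω hω; simp only [mem_filter, mem_univ, true_and] at hω ⊢; exact hω
    · intro a₁ _ a₂ _ h; exact Φ.injective h
    · intro b hb
      refine ⟨Φ.symm b, ?_, by simp⟩
      simp only [mem_filter, mem_univ, true_and] at *; simpa using hb
  rw [this]

lemma ent_comp_equiv [Fintype Ω] [Fintype Ω'] [Fintype α] [DecidableEq α] (Φ : Ω' ≃ Ω)
    (X : Ω → α) : ent (fun ω => X (Φ ω)) = ent X := by
  unfold ent
  simp only [pr_comp_equiv]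

lemma ent_comp_injective [Fintype Ω] [Fintype α] [Fintype β] [DecidableEq α] [DecidableEq β]
    {f : β → α} (hf : Function.Injective f) (X : Ω → β) :
    ent (fun ω => f (X ω)) = ent X := by
  unfold ent
  congr 1
  rw [← Finset.sum_subset (Finset.subset_univ ((Finset.univ : Finset β).image f))]
  · rw [Finset.sum_image (fun a _ b _ h => hf h)]
    refine Finset.sum_congr rfl fun b _ => ?_
    have h : pr (fun ω => f (X ω)) (f b) = pr X b := by
      unfold pr
      have : (Finset.univ.filter fun ω => f (X ω) = f b)
          = Finset.univ.filter fun ω => X ω = b := by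
        simp only [hf.eq_iff]
      rw [this]
    rw [h]
  · intro a _ ha
    have h : pr (fun ω => f (X ω)) a = 0 := by
      unfold pr
      have : (Finset.univ.filter fun ω => f (X ω) = a) = ∅ := by
        ext ω
        simp only [mem_filter, mem_univ, true_and, Finset.notMem_empty, iff_false]
        intro h; exact ha (by rw [← h]; exact Finset.mem_image_of_mem _ (mem_univ _))
      rw [this]; simp
    rw [h]; simp

lemma ent_fst {γ δ : Type*} [Fintype γ] [Fintype δ] [DecidableEq γ] [Nonempty γ] [Nonempty δ] :
    ent (fun p : γ × δ => p.1) = Real.log (Fintype.card γ) := by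
  have hγ : (Fintype.card γ : ℝ) ≠ 0 := by positivity
  have hδ : (Fintype.card δ : ℝ) ≠ 0 := by positivity
  have hpr : ∀ a : γ, pr (fun p : γ × δ => p.1) a = (Fintype.card γ : ℝ)⁻¹ := by
    intro a
    unfold pr
    have h1 : (Finset.univ.filter fun p : γ × δ => p.1 = a) = ({a} : Finset γ) ×ˢ Finset.univ := by
      ext p
      simp [Finset.mem_product, Prod.ext_iff, eq_comm]
    rw [h1, Finset.card_product, Fintype.card_prod]
    simp only [Finset.card_singleton, one_mul, Finset.card_univ]
    push_cast
    field_simp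
  unfold ent
  rw [Finset.sum_congr rfl (fun a _ => by rw [hpr a]), Finset.sum_const, Finset.card_univ,
    nsmul_eq_mul, Real.log_inv]
  field_simp

lemma ent_restrict {ι B : Type*} [Fintype ι] [DecidableEq ι] [Fintype B] [DecidableEq B]
    [Nonempty B] (T : Finset ι) :
    ent (fun (x : ι → B) (j : {j // j ∈ T}) => x j.1)
      = Real.log (Fintype.card ({j // j ∈ T} → B)) := by
  classical
  let e := Equiv.piEquivPiSubtypeProd (fun j => j ∈ T) (fun _ => B)
  have h : (fun (x : ι → B) (j : {j // j ∈ T}) => x j.1)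
      = fun x => ((fun p : ({j // j ∈ T} → B) × ({j // ¬ j ∈ T} → B) => p.1) (e x)) := rfl
  rw [h, ent_comp_equiv e, ent_fst]

lemma condEnt_of_determined [Fintype Ω] [Fintype α] [Fintype β] [DecidableEq α] [DecidableEq β]
    (X : Ω → α) (Y : Ω → β) (g : β → α) (h : ∀ ω, X ω = g (Y ω)) : condEnt X Y = 0 := by
  unfold condEnt
  have h2 : (fun ω => (X ω, Y ω)) = fun ω => ((fun b => (g b, b)) (Y ω)) := by
    funext ω; simp [h ω]
  have hinj : Function.Injective (fun b : β => (g b, b)) := by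
    intro a b hab
    exact (Prod.ext_iff.mp hab).2
  rw [h2, ent_comp_injective (f := fun b => (g b, b)) hinj Y, sub_self]

end aux

set_option maxHeartbeats 1000000 in
/-- for a valid index code with locality `r = 1`, for every receiver `i` and
every `P ⊆ [N]` with `i ∉ P`:
(i) `I(c_{R_i}; x_i | x_{K_i ∪ P}) = m`, (ii) `H(c_{R_i} | x_i, x_{K_i}) = 0`,
(iii) `H(c_{R_i} | x_P) = m`, entropy measured in units of `log |A|`. -/
theorem locality_one_entropy_lemma {N m ℓ : ℕ} (G : IndexProblem N) (A : Type*)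
    [Fintype A] [DecidableEq A] (hA : 1 < Fintype.card A) (hm : 0 < m)
    (C : IndexCode N G A m ℓ) (hloc : ∀ i, (C.R i).card ≤ m)
    (i : Fin N) (P : Finset (Fin N)) (hP : i ∉ P) :
    condMI (fun (x : Fin N → Fin m → A) (t : {t // t ∈ C.R i}) => C.enc x t.val)
        (fun x => x i)
        (fun x (j : {j // j ∈ G.K i ∪ P}) => x j.val)
      = m * Real.log (Fintype.card A) ∧
    condEnt (fun (x : Fin N → Fin m → A) (t : {t // t ∈ C.R i}) => C.enc x t.val)
        (fun x => (x i, fun j : {j // j ∈ G.K i} => x j.val))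
      = 0 ∧
    condEnt (fun (x : Fin N → Fin m → A) (t : {t // t ∈ C.R i}) => C.enc x t.val)
        (fun x (j : {j // j ∈ P}) => x j.val)
      = m * Real.log (Fintype.card A) := by
  classical
  have hAne : Nonempty A := Fintype.card_pos_iff.mp (by omega)
  obtain ⟨a0⟩ := hAne
  haveI : Nonempty A := ⟨a0⟩
  -- the queried codeword
  set c : (Fin N → Fin m → A) → {t // t ∈ C.R i} → A :=
    fun x t => C.enc x t.val with hc
  -- for a fixed frame z, the map a ↦ c (update z i a)
  set ψ : (Fin N → Fin m → A) → (Fin m → A) → ({t // t ∈ C.R i} → A) :=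
    fun z a => c (Function.update z i a) with hψ
  have hKne : ∀ j ∈ G.K i, j ≠ i := fun j hj h => G.not_self i (h ▸ hj)
  have hψinj : ∀ z, Function.Injective (ψ z) := by
    intro z a b h
    have := C.valid i (Function.update z i a) (Function.update z i b)
      (fun t ht => congrFun h ⟨t, ht⟩)
      (fun j hj => by
        rw [Function.update_of_ne (hKne j hj), Function.update_of_ne (hKne j hj)])
    simpa using this
  have hcard : Fintype.card ({t // t ∈ C.R i} → A) = Fintype.card (Fin m → A) := by
    refine le_antisymm ?_ ?_
    · rw [Fintype.card_fun, Fintype.card_fun, Fintype.card_coe, Fintype.card_fin]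
      exact Nat.pow_le_pow_right (by omega) (hloc i)
    · exact Fintype.card_le_of_injective _ (hψinj (fun _ _ => a0))
  have hψbij : ∀ z, Function.Bijective (ψ z) :=
    fun z => (Fintype.bijective_iff_injective_and_card _).mpr ⟨hψinj z, hcard.symm⟩
  -- determinism: c x depends only on x i and x on K i
  have hdet : ∀ x y : Fin N → Fin m → A, x i = y i → (∀ j ∈ G.K i, x j = y j) →
      c x = c y := by
    intro x y hxy hK
    obtain ⟨b, hb⟩ := (hψbij y).surjective (c x)
    have hxi : x i = b := by
      have := C.valid i x (Function.update y i b)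
        (fun t ht => (congrFun hb ⟨t, ht⟩).symm)
        (fun j hj => by rw [Function.update_of_ne (hKne j hj)]; exact hK j hj)
      simpa using this
    rw [← hb, hψ, ← hxi, hxy]
    simp [hc, Function.update_eq_self]
  -- the global bijection Φ
  set q : ({t // t ∈ C.R i} → A) ≃ (Fin m → A) := Fintype.equivOfCardEq hcard with hq
  set Φ : (Fin N → Fin m → A) → (Fin N → Fin m → A) :=
    fun x => Function.update x i (q (c x)) with hΦ
  have hΦinj : Function.Injective Φ := by
    intro x y h
    have hout : ∀ j, j ≠ i → x j = y j := by
      intro j hj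
      have h1 := congrFun h j
      simp only [hΦ, Function.update_of_ne hj] at h1
      exact h1
    have hci : c x = c y := by
      apply q.injective
      have h2 := congrFun h i
      simp only [hΦ, Function.update_self] at h2
      exact h2
    have hxy : x i = y i :=
      C.valid i x y (fun t ht => congrFun hci ⟨t, ht⟩) (fun j hj => hout j (hKne j hj))
    funext j
    by_cases hj : j = i
    · subst hj; exact hxy
    · exact hout j hj
  obtain ⟨Φe, hΦe⟩ : ∃ Φe : (Fin N → Fin m → A) ≃ (Fin N → Fin m → A), ∀ x, Φe x = Φ x :=
    ⟨Equiv.ofBijective Φ (Finite.injective_iff_bijective.mp hΦinj), fun _ => rfl⟩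
  -- entropy of a restriction, numerically
  have entval : ∀ T : Finset (Fin N),
      Real.log (Fintype.card ({j // j ∈ T} → Fin m → A))
        = (T.card : ℝ) * ((m : ℝ) * Real.log (Fintype.card A)) := by
    intro T
    rw [Fintype.card_fun, Fintype.card_coe, Fintype.card_fun, Fintype.card_fin,
      Nat.cast_pow, Nat.cast_pow, Real.log_pow, Real.log_pow]
  -- key computation (iii), for arbitrary S with i ∉ S
  have key3 : ∀ S : Finset (Fin N), i ∉ S →
      condEnt c (fun x (j : {j // j ∈ S}) => x j.val)
        = (m : ℝ) * Real.log (Fintype.card A) := by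
    intro S hS
    set F1 : (Fin m → A) × ({j // j ∈ S} → Fin m → A)
        → ({t // t ∈ C.R i} → A) × ({j // j ∈ S} → Fin m → A) :=
      fun p => (q.symm p.1, p.2) with hF1def
    set G2 : (Fin N → Fin m → A) → (Fin m → A) × ({j // j ∈ S} → Fin m → A) :=
      fun y => (y i, fun j : {j // j ∈ S} => y j.val) with hG2def
    set F3 : ({j // j ∈ insert i S} → Fin m → A)
        → (Fin m → A) × ({j // j ∈ S} → Fin m → A) :=
      fun r => (r ⟨i, Finset.mem_insert_self i S⟩,
        fun j : {j // j ∈ S} => r ⟨j.1, Finset.mem_insert_of_mem j.2⟩) with hF3def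
    have hF1 : Function.Injective F1 := by
      intro a b hab
      simp only [hF1def] at hab
      obtain ⟨h1, h2⟩ := Prod.ext_iff.mp hab
      exact Prod.ext (q.symm.injective h1) h2
    have hF3 : Function.Injective F3 := by
      intro r r' h
      simp only [hF3def] at h
      obtain ⟨h1, h2⟩ := Prod.ext_iff.mp h
      funext j
      rcases Finset.mem_insert.mp j.2 with hj | hj
      · have hji : j = ⟨i, Finset.mem_insert_self i S⟩ := Subtype.ext hj
        rw [hji]; exact h1
      · exact congrFun h2 ⟨j.1, hj⟩
    have hpair : (fun x => (c x, fun j : {j // j ∈ S} => x j.val))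
        = fun x => F1 (G2 (Φe x)) := by
      funext x
      have h1 : Φe x i = q (c x) := by
        rw [hΦe]; simp only [hΦ, Function.update_self]
      have h2 : ∀ j : {j // j ∈ S}, Φe x j.val = x j.val := by
        intro j
        rw [hΦe]
        simp only [hΦ]
        refine Function.update_of_ne (fun h => hS ?_) _ _
        rw [← h]; exact j.2
      simp only [hF1def, hG2def, h1, Equiv.symm_apply_apply]
      exact Prod.ext rfl (funext fun j => (h2 j).symm)
    have e1 : ent (fun x => (c x, fun j : {j // j ∈ S} => x j.val))
        = ent (fun y => F1 (G2 y)) := by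
      rw [hpair]
      exact ent_comp_equiv Φe (fun y => F1 (G2 y))
    have e2 : ent (fun y => F1 (G2 y)) = ent G2 := ent_comp_injective hF1 G2
    have e3 : ent G2
        = ent (fun (x : Fin N → Fin m → A) (j : {j // j ∈ insert i S}) => x j.1) := by
      have hG2F3 : G2 = fun x =>
          F3 ((fun (x : Fin N → Fin m → A) (j : {j // j ∈ insert i S}) => x j.1) x) := by
        funext x
        simp only [hG2def, hF3def]
      rw [hG2F3]
      exact ent_comp_injective hF3 (fun (x : Fin N → Fin m → A) (j : {j // j ∈ insert i S}) => x j.1)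
    unfold condEnt
    rw [e1, e2, e3, ent_restrict, ent_restrict, entval, entval,
      Finset.card_insert_of_notMem hS]
    push_cast
    ring
  -- determinism consequences
  have hdet2 : ∀ (S : Finset (Fin N)), (G.K i ⊆ S) → i ∉ S →
      condEnt c (fun x => (x i, fun j : {j // j ∈ S} => x j.val)) = 0 := by
    intro S hKS hiS
    refine condEnt_of_determined _ _
      (fun p : (Fin m → A) × ({j // j ∈ S} → Fin m → A) =>
        c (fun j => if h : j ∈ S then p.2 ⟨j, h⟩ else if j = i then p.1 else fun _ => a0)) ?_
    intro x
    apply hdet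
    · simp [hiS]
    · intro j hj
      simp [hKS hj]
  refine ⟨?_, ?_, key3 P hP⟩
  · -- part (i)
    have hiKP : i ∉ G.K i ∪ P := by
      simp [G.not_self i, hP]
    unfold condMI
    rw [key3 (G.K i ∪ P) hiKP, hdet2 (G.K i ∪ P) Finset.subset_union_left hiKP, sub_zero]
  · -- part (ii)
    refine condEnt_of_determined _ _
      (fun p : (Fin m → A) × ({j // j ∈ G.K i} → Fin m → A) =>
        c (fun j => if h : j ∈ G.K i then p.2 ⟨j, h⟩ else if j = i then p.1 else fun _ => a0)) ?_
    intro x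
    apply hdet
    · simp [G.not_self i]
    · intro j hj
      simp [hj]
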